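/- Let u ≥ 1 and m ≥ 2, and let a_0, a_1, …, a_m be natural numbers with a_i < 2^u for every i and a_{i−1} ≠ a_i for every i ∈ [1..m]. Define b_i = vbit(a_{i−1}, a_i) for i ∈ [1..m] (so b_{i−1} ≠ b_i for i ∈ [2..m]), and define c_i = vbit(b_{i−1}, b_i) for i ∈ [2..m]. Then c_{i−1} ≠ c_i for every i ∈ [3..m], and c_i < 2·size(2u) for every i ∈ [2..m], where size(x) denotes the number of binary digits of a positive natural number x (i.e., size(x) = ⌊log₂ x⌋ + 1). -/
import Mathlib

open scoped Classical

noncomputable def lbit (x y : ℕ) : ℕ :=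
  if h : ∃ i, x.testBit i ≠ y.testBit i then Nat.find h else 0

noncomputable def vbit (x y : ℕ) : ℕ :=
  2 * lbit x y + (if Nat.testBit x (lbit x y) then 1 else 0)

lemma exists_bit_ne {x y : ℕ} (h : x ≠ y) : ∃ i, x.testBit i ≠ y.testBit i := by
  by_contra hc
  push_neg at hc
  exact h (Nat.eq_of_testBit_eq hc)

lemma lbit_spec {x y : ℕ} (h : x ≠ y) :
    x.testBit (lbit x y) ≠ y.testBit (lbit x y) := by
  have he := exists_bit_ne h
  simp only [lbit, dif_pos he]
  exact Nat.find_spec he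

lemma vbit_ne (x y z : ℕ) (hxy : x ≠ y) (hyz : y ≠ z) : vbit x y ≠ vbit y z := by
  intro h
  have h1 := lbit_spec hxy
  have h2 := lbit_spec hyz
  unfold vbit at h
  have hl : lbit x y = lbit y z := by
    cases hx : Nat.testBit x (lbit x y) <;> cases hy : Nat.testBit y (lbit y z) <;>
      simp [hx, hy] at h <;> omega
  rw [hl] at h h1
  cases hx : Nat.testBit x (lbit y z) <;> cases hy : Nat.testBit y (lbit y z) <;>
    simp [hx, hy] at h h1

lemma lbit_lt {u x y : ℕ} (h : x ≠ y) (hx : x < 2 ^ u) (hy : y < 2 ^ u) :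
    lbit x y < u := by
  by_contra hge
  push_neg at hge
  have := lbit_spec h
  rw [Nat.testBit_lt_two_pow (lt_of_lt_of_le hx (Nat.pow_le_pow_right (by norm_num) hge)),
      Nat.testBit_lt_two_pow (lt_of_lt_of_le hy (Nat.pow_le_pow_right (by norm_num) hge))] at this
  exact this rfl

lemma vbit_lt {u x y : ℕ} (h : x ≠ y) (hx : x < 2 ^ u) (hy : y < 2 ^ u) :
    vbit x y < 2 * u := by
  have := lbit_lt h hx hy
  unfold vbit
  split <;> omega

/-- Two iterations of the deterministic coin tossing step. -/
theorem stmt3 (u m : ℕ) (hu : 1 ≤ u) (hm : 2 ≤ m) (a b c : ℕ → ℕ)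
    (ha : ∀ i ≤ m, a i < 2 ^ u)
    (hne : ∀ i, 1 ≤ i → i ≤ m → a (i - 1) ≠ a i)
    (hb : ∀ i, 1 ≤ i → i ≤ m → b i = vbit (a (i - 1)) (a i))
    (hc : ∀ i, 2 ≤ i → i ≤ m → c i = vbit (b (i - 1)) (b i)) :
    (∀ i, 3 ≤ i → i ≤ m → c (i - 1) ≠ c i) ∧
    (∀ i, 2 ≤ i → i ≤ m → c i < 2 * Nat.size (2 * u)) := by
  have hbne : ∀ i, 2 ≤ i → i ≤ m → b (i - 1) ≠ b i := by
    intro i h2 him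
    rw [hb (i - 1) (by omega) (by omega), hb i (by omega) him]
    exact vbit_ne _ _ _ (hne (i - 1) (by omega) (by omega))
      (hne i (by omega) him)
  have hblt : ∀ i, 1 ≤ i → i ≤ m → b i < 2 ^ Nat.size (2 * u) := by
    intro i h1 him
    have h2u : b i < 2 * u := by
      rw [hb i h1 him]
      exact vbit_lt (hne i h1 him) (ha (i - 1) (by omega)) (ha i him)
    exact lt_trans h2u (Nat.lt_size_self _)
  constructor
  · intro i h3 him
    rw [hc (i - 1) (by omega) (by omega), hc i (by omega) him]
    exact vbit_ne _ _ _ (hbne (i - 1) (by omega) (by omega)) (hbne i (by omega) him)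
  · intro i h2 him
    rw [hc i h2 him]
    exact vbit_lt (hbne i h2 him) (hblt (i - 1) (by omega) (by omega)) (hblt i (by omega) him)
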